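/- Let V be a finite set, p : V → ℍ² a family of points in the hyperbolic plane, R ≥ 0, and G the hyperbolic unit disk graph on V with threshold R. If (e_1,…,e_m) is any enumeration of all edges of G sorted in non-increasing order of the hyperbolic lengths d(p(u), p(v)) of their endpoints, then (e_1,…,e_m) is a co-bipartite neighborhood edge elimination ordering (CNEEO) of G. -/

import Mathlib

open Complex

/-- invariant quantity: normSq(w-z)/(im w * im z) -/
noncomputable def Qh (w z : ℂ) : ℝ := Complex.normSq (w - z) / (w.im * z.im)

lemma mob_denom_ne (a b c d : ℝ) (h : a*d - b*c = 1) (w : ℂ) (hw : 0 < w.im) :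
    (c:ℂ)*w + d ≠ 0 := by
  intro hcd
  rcases eq_or_ne c 0 with hc | hc
  · have hd : (d:ℂ) = 0 := by simpa [hc] using hcd
    have : d = 0 := by exact_mod_cast hd
    rw [hc, this] at h; norm_num at h
  · have : ((c:ℂ)*w + d).im = c * w.im := by simp
    rw [hcd] at this
    have : c * w.im = 0 := by simpa using this.symm
    rcases mul_eq_zero.1 this with h' | h'
    · exact hc h'
    · exact hw.ne' h'

lemma mob_im (a b c d : ℝ) (w : ℂ) :
    ((( a:ℂ)*w + b)/((c:ℂ)*w + d)).im
      = (a*d - b*c) * w.im / Complex.normSq ((c:ℂ)*w + d) := by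
  rw [Complex.div_im]
  simp [Complex.normSq_apply]
  ring

lemma mob_sub (a b c d : ℝ) (h : a*d - b*c = 1) (w z : ℂ)
    (hw : (c:ℂ)*w + d ≠ 0) (hz : (c:ℂ)*z + d ≠ 0) :
    ((a:ℂ)*w + b)/((c:ℂ)*w + d) - ((a:ℂ)*z + b)/((c:ℂ)*z + d)
      = (w - z)/(((c:ℂ)*w + d)*((c:ℂ)*z + d)) := by
  have hC : (a:ℂ)*d - b*c = 1 := by exact_mod_cast congrArg (Complex.ofReal) h
  rw [div_sub_div _ _ hw hz]
  congr 1
  linear_combination (w - z) * hC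

def GoodMap (f : ℂ → ℂ) : Prop :=
  (∀ w, 0 < w.im → 0 < (f w).im) ∧
  (∀ w z, 0 < w.im → 0 < z.im → Qh (f w) (f z) = Qh w z)

lemma mob_good (a b c d : ℝ) (h : a*d - b*c = 1) :
    GoodMap (fun w => ((a:ℂ)*w + b)/((c:ℂ)*w + d)) := by
  have him : ∀ w : ℂ, 0 < w.im →
      (((a:ℂ)*w + b)/((c:ℂ)*w + d)).im = w.im / Complex.normSq ((c:ℂ)*w + d) := by
    intro w hw
    rw [mob_im, h, one_mul]
  constructor
  · intro w hw
    rw [him w hw]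
    exact div_pos hw (Complex.normSq_pos.2 (mob_denom_ne a b c d h w hw))
  · intro w z hw hz
    have hdw := mob_denom_ne a b c d h w hw
    have hdz := mob_denom_ne a b c d h z hz
    unfold Qh
    rw [mob_sub a b c d h w z hdw hdz, him w hw, him z hz]
    rw [Complex.normSq_div, Complex.normSq_mul]
    have h1 : Complex.normSq ((c:ℂ)*w + d) ≠ 0 := (Complex.normSq_pos.2 hdw).ne'
    have h2 : Complex.normSq ((c:ℂ)*z + d) ≠ 0 := (Complex.normSq_pos.2 hdz).ne'
    field_simp
    rw [mul_assoc, mul_div_assoc, div_self (mul_ne_zero (by simpa [mul_comm] using h1)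
      (by simpa [mul_comm] using h2)), mul_one]

lemma good_comp {f g : ℂ → ℂ} (hf : GoodMap f) (hg : GoodMap g) : GoodMap (g ∘ f) := by
  refine ⟨fun w hw => hg.1 _ (hf.1 w hw), fun w z hw hz => ?_⟩
  rw [Function.comp_apply, Function.comp_apply, hg.2 _ _ (hf.1 w hw) (hf.1 z hz),
    hf.2 w z hw hz]

lemma good_id : GoodMap id := ⟨fun w hw => hw, fun w z _ _ => rfl⟩

lemma exists_rot (x y : ℝ) (hy : 0 < y) :
    ∃ c s : ℝ, c^2 + s^2 = 1 ∧ (c*s)*(x^2+y^2-1) + (c^2-s^2)*x = 0 := by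
  set v := (x^2+y^2-1)/2 with hv
  by_cases h0 : x = 0 ∧ v = 0
  · exact ⟨1, 0, by norm_num, by rw [h0.1]; ring⟩
  · have hρ2 : 0 < x^2 + v^2 := by
      rcases not_and_or.1 h0 with h | h
      · have : 0 < x^2 := by positivity
        nlinarith [sq_nonneg v]
      · have : 0 < v^2 := by positivity
        nlinarith [sq_nonneg x]
    set ρ := Real.sqrt (x^2 + v^2) with hρ
    have hρ0 : 0 < ρ := Real.sqrt_pos.2 hρ2
    have hρsq : ρ^2 = x^2 + v^2 := Real.sq_sqrt hρ2.le
    set C := v/ρ with hC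
    set S := -x/ρ with hS
    have hCS : C^2 + S^2 = 1 := by
      rw [hC, hS]; field_simp; linarith [hρsq]
    have hC1 : -1 ≤ C := by nlinarith [sq_nonneg S]
    set c := Real.sqrt ((1+C)/2) with hc
    have hc0 : 0 ≤ c := Real.sqrt_nonneg _
    have hc_sq : c^2 = (1+C)/2 := Real.sq_sqrt (by linarith)
    refine ⟨c, if c = 0 then (1:ℝ) else S/(2*c), ?_, ?_⟩
    · rcases eq_or_ne c 0 with h' | h'
      · have hCm1 : C = -1 := by rw [h'] at hc_sq; norm_num at hc_sq; linarith
        rw [if_pos h', h']; norm_num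
      · rw [if_neg h']
        have h1C : (0:ℝ) < 1 + C := by
          rcases lt_or_eq_of_le hC1 with h'' | h''
          · linarith
          · exfalso; apply h'; rw [hc, ← h'']; norm_num
        have hS2 : S^2 = 1 - C^2 := by linarith
        have hc2 : c ≠ 0 := h'
        field_simp
        nlinarith [hc_sq, hS2]
    · rcases eq_or_ne c 0 with h' | h'
      · have hCm1 : C = -1 := by rw [h'] at hc_sq; norm_num at hc_sq; linarith
        have hS0 : S = 0 := by nlinarith [sq_nonneg S]
        have hx0 : x = 0 := by
          have := hS0
          rw [hS] at this
          field_simp at this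
          linarith [this]
        rw [if_pos h', h', hx0]; ring
      · rw [if_neg h']
        have h2cs : 2*c*(S/(2*c)) = S := by field_simp
        have hcss : c^2 - (S/(2*c))^2 = C := by
          have h1C : (0:ℝ) < 1 + C := by
            rcases lt_or_eq_of_le hC1 with h'' | h''
            · linarith
            · exfalso; apply h'; rw [hc, ← h'']; norm_num
          have hS2 : S^2 = 1 - C^2 := by linarith
          have h4 : (2*c)^2 = 2*(1+C) := by linear_combination 4*hc_sq
          rw [div_pow, h4, hS2, hc_sq]
          field_simp
          ring
        have hxv : x^2+y^2-1 = 2*v := by rw [hv]; ring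
        rw [hxv]
        have key : S*v + C*x = 0 := by
          rw [hS, hC]; field_simp; ring
        calc c*(S/(2*c))*(2*v) + (c^2 - (S/(2*c))^2)*x
            = (2*c*(S/(2*c)))*v + (c^2 - (S/(2*c))^2)*x := by ring
          _ = S*v + C*x := by rw [h2cs, hcss]
          _ = 0 := key

lemma exists_norm (z1 z2 : ℂ) (h1 : 0 < z1.im) (h2 : 0 < z2.im) :
    ∃ (f : ℂ → ℂ) (t : ℝ), GoodMap f ∧ 1 ≤ t ∧ f z1 = I ∧ f z2 = (t:ℝ)*I := by
  obtain ⟨r, b, hb0, hz1⟩ : ∃ r b : ℝ, 0 < b ∧ z1 = (r:ℂ) + (b:ℂ)*I :=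
    ⟨z1.re, z1.im, h1, by apply Complex.ext <;> simp⟩
  set sb := Real.sqrt b with hsb
  have hsb0 : 0 < sb := Real.sqrt_pos.2 hb0
  have hsbsq : sb * sb = b := Real.mul_self_sqrt hb0.le
  have detA : (1/sb)*sb - (-r/sb)*0 = 1 := by field_simp; ring
  set fA : ℂ → ℂ := fun w => (((1/sb : ℝ):ℂ)*w + ((-r/sb : ℝ):ℂ))/(((0:ℝ):ℂ)*w + ((sb:ℝ):ℂ)) with hfA
  have goodA : GoodMap fA := mob_good _ _ _ _ detA
  have hA1 : fA z1 = I := by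
    rw [hfA]
    simp only
    have hsbC : ((sb:ℝ):ℂ) ≠ 0 := by exact_mod_cast hsb0.ne'
    rw [div_eq_iff (by simpa using hsbC)]
    rw [hz1]
    push_cast
    have : (sb:ℂ) * sb = (b:ℂ) := by exact_mod_cast congrArg (fun x : ℝ => (x:ℂ)) hsbsq
    field_simp
    linear_combination (-I) * this
  set z2' := fA z2 with hz2'
  have hz2'im : 0 < z2'.im := goodA.1 z2 h2
  obtain ⟨c, s, hcs, hcond⟩ := exists_rot z2'.re z2'.im hz2'im
  have detB : c*c - (-s)*s = 1 := by linear_combination hcs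
  set fB : ℂ → ℂ := fun w => (((c:ℝ):ℂ)*w + ((-s:ℝ):ℂ))/(((s:ℝ):ℂ)*w + ((c:ℝ):ℂ)) with hfB
  have goodB : GoodMap fB := mob_good _ _ _ _ detB
  have hBden : ∀ w : ℂ, 0 < w.im → ((s:ℝ):ℂ)*w + ((c:ℝ):ℂ) ≠ 0 :=
    fun w hw => mob_denom_ne _ _ _ _ detB w hw
  have hBI : fB I = I := by
    rw [hfB]
    simp only
    rw [div_eq_iff (hBden I (by simp))]
    apply Complex.ext <;> simp
  have hre : (fB z2').re = 0 := by
    rw [hfB]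
    simp only
    have hden := hBden z2' hz2'im
    have hnum : ((c:ℝ):ℂ)*z2' + ((-s:ℝ):ℂ) = ((c*z2'.re - s : ℝ):ℂ) + ((c*z2'.im : ℝ):ℂ)*I := by
      apply Complex.ext <;> simp <;> ring
    have hden2 : ((s:ℝ):ℂ)*z2' + ((c:ℝ):ℂ) = ((s*z2'.re + c : ℝ):ℂ) + ((s*z2'.im : ℝ):ℂ)*I := by
      apply Complex.ext <;> simp <;> ring
    rw [hnum, hden2, Complex.div_re]
    have e1 : (((c*z2'.re - s : ℝ):ℂ) + ((c*z2'.im : ℝ):ℂ)*I).re = c*z2'.re - s := by simp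
    have e2 : (((c*z2'.re - s : ℝ):ℂ) + ((c*z2'.im : ℝ):ℂ)*I).im = c*z2'.im := by simp
    have e3 : (((s*z2'.re + c : ℝ):ℂ) + ((s*z2'.im : ℝ):ℂ)*I).re = s*z2'.re + c := by simp
    have e4 : (((s*z2'.re + c : ℝ):ℂ) + ((s*z2'.im : ℝ):ℂ)*I).im = s*z2'.im := by simp
    rw [e1, e2, e3, e4]
    rw [← add_div, div_eq_zero_iff]
    left
    linear_combination hcond
  set t0 := (fB z2').im with ht0
  have ht00 : 0 < t0 := goodB.1 z2' hz2'im
  have hBz2 : fB z2' = (t0:ℝ)*I := by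
    apply Complex.ext
    · rw [hre]; simp
    · simp; exact ht0.symm
  rcases le_or_gt 1 t0 with hge | hlt
  · refine ⟨fB ∘ fA, t0, good_comp goodA goodB, hge, ?_, ?_⟩
    · rw [Function.comp_apply, hA1, hBI]
    · rw [Function.comp_apply, ← hz2', hBz2]
  · have detC : (0:ℝ)*0 - (-1)*1 = 1 := by norm_num
    set fC : ℂ → ℂ := fun w => (((0:ℝ):ℂ)*w + ((-1:ℝ):ℂ))/(((1:ℝ):ℂ)*w + ((0:ℝ):ℂ)) with hfC
    have goodC : GoodMap fC := mob_good _ _ _ _ detC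
    have hCI : fC I = I := by
      rw [hfC]
      simp only
      rw [div_eq_iff (by simp [Complex.ext_iff] : ((1:ℝ):ℂ)*I + ((0:ℝ):ℂ) ≠ 0)]
      apply Complex.ext <;> simp
    have hCt : fC ((t0:ℝ)*I) = ((1/t0 : ℝ):ℂ)*I := by
      rw [hfC]
      simp only
      rw [div_eq_iff]
      · push_cast
        rw [mul_comm]
        have : (t0:ℂ) ≠ 0 := by exact_mod_cast ht00.ne'
        field_simp
        linear_combination (-(t0:ℂ)) * Complex.I_sq
      · push_cast
        simp only [one_mul, add_zero]
        exact mul_ne_zero (by exact_mod_cast ht00.ne') Complex.I_ne_zero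
    refine ⟨fC ∘ (fB ∘ fA), 1/t0, good_comp (good_comp goodA goodB) goodC,
      one_le_one_div ht00 hlt.le, ?_, ?_⟩
    · rw [Function.comp_apply, Function.comp_apply, hA1, hBI, hCI]
    · rw [Function.comp_apply, Function.comp_apply, ← hz2', hBz2, hCt]

lemma key_one (x y : ℝ) (hx : 0 ≤ x) (C : 1*(x^2+y^2+1) ≤ y*(1^2+1)) : x = 0 ∧ y = 1 := by
  constructor
  · exact le_antisymm (by nlinarith [sq_nonneg (y-1)]) hx
  · nlinarith [sq_nonneg (y-1), sq_nonneg x]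

lemma key_aux (t x1 y1 x2 y2 : ℝ) (ht : 1 ≤ t) (hx1 : 0 ≤ x1) (hx2 : 0 ≤ x2)
    (hy1 : 0 < y1) (hy2 : 0 < y2) (hxx : x2 ≤ x1)
    (C1 : t*(x1^2+y1^2+1) ≤ y1*(t^2+1)) (C2 : x1^2+y1^2+t^2 ≤ y1*(t^2+1))
    (C3 : t*(x2^2+y2^2+1) ≤ y2*(t^2+1)) (C4 : x2^2+y2^2+t^2 ≤ y2*(t^2+1)) :
    t*((x1-x2)^2+y1^2+y2^2) ≤ y1*y2*(t^2+1) := by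
  rcases eq_or_lt_of_le ht with h | htt
  · subst h
    obtain ⟨a1, b1⟩ := key_one x1 y1 hx1 C1
    obtain ⟨a2, b2⟩ := key_one x2 y2 hx2 C3
    subst a1; subst a2; subst b1; subst b2; norm_num
  have ht0 : (0:ℝ) < t := lt_of_lt_of_le one_pos ht
  have D1 : t*x1^2 ≤ (t - y1)*(t*y1 - 1) := by nlinarith [C1]
  have D2 : x1^2 ≤ (y1 - 1)*(t^2 - y1) := by nlinarith [C2]
  have D4 : x2^2 ≤ (y2 - 1)*(t^2 - y2) := by nlinarith [C4]
  have hy2l : 1 ≤ y2 := by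
    by_contra h; push_neg at h
    have h1 : 0 < t^2 - y2 := by nlinarith
    nlinarith [mul_pos (by linarith : (0:ℝ) < 1 - y2) h1, sq_nonneg x2]
  have hy2u : y2 ≤ t := by
    by_contra h; push_neg at h
    have h1 : 0 < t*y2 - 1 := by nlinarith
    have D3 : t*x2^2 ≤ (t - y2)*(t*y2 - 1) := by nlinarith [C3]
    nlinarith [mul_pos (by linarith : (0:ℝ) < y2 - t) h1, mul_nonneg ht0.le (sq_nonneg x2)]
  have E1 : (x1-x2)^2 ≤ x1^2 := by nlinarith
  have E2 : t*(x1-x2)^2 ≤ t*x1^2 := mul_le_mul_of_nonneg_left E1 ht0.le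
  have E3 : t*x1^2 ≤ t*((y1 - 1)*(t^2 - y1)) := mul_le_mul_of_nonneg_left D2 ht0.le
  have h1 : (t-y2)*(t*(x1-x2)^2) ≤ (t-y2)*((t - y1)*(t*y1 - 1)) :=
    mul_le_mul_of_nonneg_left (le_trans E2 D1) (by linarith)
  have h2 : (y2-1)*(t*(x1-x2)^2) ≤ (y2-1)*(t*((y1 - 1)*(t^2 - y1))) :=
    mul_le_mul_of_nonneg_left (le_trans E2 E3) (by linarith)
  have prod : 0 ≤ t*(t-1)*((y2-1)*(t-y2)) :=
    mul_nonneg (mul_nonneg ht0.le (by linarith)) (mul_nonneg (by linarith) (by linarith))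
  have step : (t-1)*(t*(x1-x2)^2) ≤ (t-1)*((t*y1-y2)*(t*y2-y1)) := by
    linarith only [h1, h2, prod]
  have fin : t*(x1-x2)^2 ≤ (t*y1-y2)*(t*y2-y1) :=
    le_of_mul_le_mul_left step (by linarith)
  linarith only [fin]

lemma key_sym (t x1 y1 x2 y2 : ℝ) (ht : 1 ≤ t) (hx1 : 0 ≤ x1) (hx2 : 0 ≤ x2)
    (hy1 : 0 < y1) (hy2 : 0 < y2)
    (C1 : t*(x1^2+y1^2+1) ≤ y1*(t^2+1)) (C2 : x1^2+y1^2+t^2 ≤ y1*(t^2+1))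
    (C3 : t*(x2^2+y2^2+1) ≤ y2*(t^2+1)) (C4 : x2^2+y2^2+t^2 ≤ y2*(t^2+1)) :
    t*((x1-x2)^2+y1^2+y2^2) ≤ y1*y2*(t^2+1) := by
  rcases le_total x2 x1 with h | h
  · exact key_aux t x1 y1 x2 y2 ht hx1 hx2 hy1 hy2 h C1 C2 C3 C4
  · linarith [key_aux t x2 y2 x1 y1 ht hx2 hx1 hy2 hy1 h C3 C4 C1 C2]

lemma Qh_coord (a b c d : ℝ) :
    Qh ((a:ℂ)+(b:ℂ)*Complex.I) ((c:ℂ)+(d:ℂ)*Complex.I) = ((a-c)^2+(b-d)^2)/(b*d) := by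
  unfold Qh
  simp [Complex.normSq_apply]
  ring_nf

lemma Qh_It (t : ℝ) : Qh Complex.I (((t:ℝ):ℂ)*Complex.I) = (t-1)^2/t := by
  unfold Qh
  simp [Complex.normSq_apply]
  ring_nf

lemma Qh_Ixy (x y : ℝ) : Qh Complex.I ((x:ℂ)+(y:ℂ)*Complex.I) = (x^2+(y-1)^2)/y := by
  unfold Qh
  simp [Complex.normSq_apply]
  ring_nf

lemma Qh_tIxy (t x y : ℝ) : Qh (((t:ℝ):ℂ)*Complex.I) ((x:ℂ)+(y:ℂ)*Complex.I) = (x^2+(y-t)^2)/(t*y) := by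
  unfold Qh
  simp [Complex.normSq_apply]
  ring_nf

lemma cosh_dist_Qh (z w : UpperHalfPlane) :
    Real.cosh (dist z w) = 1 + Qh (z:ℂ) (w:ℂ) / 2 := by
  rw [UpperHalfPlane.cosh_dist]
  unfold Qh
  rw [Complex.dist_eq, Complex.sq_norm, UpperHalfPlane.coe_im, UpperHalfPlane.coe_im]
  ring

lemma dist_le_iff_Qh (z w z' w' : UpperHalfPlane) :
    dist z w ≤ dist z' w' ↔ Qh (z:ℂ) (w:ℂ) ≤ Qh (z':ℂ) (w':ℂ) := by
  constructor
  · intro h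
    have h' : |dist z w| ≤ |dist z' w'| := by
      rwa [_root_.abs_of_nonneg dist_nonneg, _root_.abs_of_nonneg dist_nonneg]
    have := Real.cosh_le_cosh.2 h'
    rw [cosh_dist_Qh, cosh_dist_Qh] at this
    linarith
  · intro h
    have h2 : Real.cosh (dist z w) ≤ Real.cosh (dist z' w') := by
      rw [cosh_dist_Qh, cosh_dist_Qh]; linarith
    have := Real.cosh_le_cosh.1 h2
    rwa [_root_.abs_of_nonneg dist_nonneg, _root_.abs_of_nonneg dist_nonneg] at this

lemma half_lens (z1 z2 w1 w2 : UpperHalfPlane) (f : ℂ → ℂ) (t : ℝ) (hf : GoodMap f) (ht : 1 ≤ t)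
    (hf1 : f (z1:ℂ) = Complex.I) (hf2 : f (z2:ℂ) = (t:ℝ)*Complex.I)
    (hside : 0 ≤ (f (w1:ℂ)).re * (f (w2:ℂ)).re)
    (h11 : dist z1 w1 ≤ dist z1 z2) (h12 : dist z2 w1 ≤ dist z1 z2)
    (h21 : dist z1 w2 ≤ dist z1 z2) (h22 : dist z2 w2 ≤ dist z1 z2) :
    dist w1 w2 ≤ dist z1 z2 := by
  have ht0 : (0:ℝ) < t := lt_of_lt_of_le one_pos ht
  have imz1 : (0:ℝ) < (z1:ℂ).im := z1.im_pos
  have imz2 : (0:ℝ) < (z2:ℂ).im := z2.im_pos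
  have imw1 : (0:ℝ) < (w1:ℂ).im := w1.im_pos
  have imw2 : (0:ℝ) < (w2:ℂ).im := w2.im_pos
  set x1 := (f (w1:ℂ)).re with hx1d
  set y1 := (f (w1:ℂ)).im with hy1d
  set x2 := (f (w2:ℂ)).re with hx2d
  set y2 := (f (w2:ℂ)).im with hy2d
  have hy1 : 0 < y1 := hf.1 _ imw1
  have hy2 : 0 < y2 := hf.1 _ imw2
  have hw1c : f (w1:ℂ) = (x1:ℂ) + (y1:ℂ)*Complex.I := by apply Complex.ext <;> simp [hx1d, hy1d]
  have hw2c : f (w2:ℂ) = (x2:ℂ) + (y2:ℂ)*Complex.I := by apply Complex.ext <;> simp [hx2d, hy2d]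
  have Qz : Qh (z1:ℂ) (z2:ℂ) = (t-1)^2/t := by
    rw [← hf.2 _ _ imz1 imz2, hf1, hf2, Qh_It]
  have Q11 : Qh (z1:ℂ) (w1:ℂ) = (x1^2+(y1-1)^2)/y1 := by
    rw [← hf.2 _ _ imz1 imw1, hf1, hw1c, Qh_Ixy]
  have Q12 : Qh (z2:ℂ) (w1:ℂ) = (x1^2+(y1-t)^2)/(t*y1) := by
    rw [← hf.2 _ _ imz2 imw1, hf2, hw1c, Qh_tIxy]
  have Q21 : Qh (z1:ℂ) (w2:ℂ) = (x2^2+(y2-1)^2)/y2 := by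
    rw [← hf.2 _ _ imz1 imw2, hf1, hw2c, Qh_Ixy]
  have Q22 : Qh (z2:ℂ) (w2:ℂ) = (x2^2+(y2-t)^2)/(t*y2) := by
    rw [← hf.2 _ _ imz2 imw2, hf2, hw2c, Qh_tIxy]
  have Qw : Qh (w1:ℂ) (w2:ℂ) = ((x1-x2)^2+(y1-y2)^2)/(y1*y2) := by
    rw [← hf.2 _ _ imw1 imw2, hw1c, hw2c, Qh_coord]
  have c11 := (dist_le_iff_Qh _ _ _ _).1 h11; rw [Q11, Qz] at c11
  have c12 := (dist_le_iff_Qh _ _ _ _).1 h12; rw [Q12, Qz] at c12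
  have c21 := (dist_le_iff_Qh _ _ _ _).1 h21; rw [Q21, Qz] at c21
  have c22 := (dist_le_iff_Qh _ _ _ _).1 h22; rw [Q22, Qz] at c22
  rw [dist_le_iff_Qh, Qw, Qz]
  rw [div_le_div_iff₀ hy1 ht0] at c11
  rw [div_le_div_iff₀ (by positivity) ht0] at c12
  rw [div_le_div_iff₀ hy2 ht0] at c21
  rw [div_le_div_iff₀ (by positivity) ht0] at c22
  have C1 : t*(x1^2+y1^2+1) ≤ y1*(t^2+1) := by linarith only [c11]
  have C2 : x1^2+y1^2+t^2 ≤ y1*(t^2+1) :=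
    le_of_mul_le_mul_left (by linarith only [c12] : t*(x1^2+y1^2+t^2) ≤ t*(y1*(t^2+1))) ht0
  have C3 : t*(x2^2+y2^2+1) ≤ y2*(t^2+1) := by linarith only [c21]
  have C4 : x2^2+y2^2+t^2 ≤ y2*(t^2+1) :=
    le_of_mul_le_mul_left (by linarith only [c22] : t*(x2^2+y2^2+t^2) ≤ t*(y2*(t^2+1))) ht0
  rw [div_le_div_iff₀ (by positivity) ht0]
  rcases mul_nonneg_iff.1 hside with ⟨ha, hb⟩ | ⟨ha, hb⟩
  · linarith only [key_sym t x1 y1 x2 y2 ht ha hb hy1 hy2 C1 C2 C3 C4]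
  · have := key_sym t (-x1) y1 (-x2) y2 ht (by linarith only [ha]) (by linarith only [hb]) hy1 hy2
      (by linarith only [C1]) (by linarith only [C2]) (by linarith only [C3]) (by linarith only [C4])
    linarith only [this]



/-- `L` is a co-bipartite neighborhood edge elimination ordering (CNEEO) of `G`:
an ordering of all edges of `G` such that for every `i`, letting `G_L[i]` be the
spanning subgraph with edge set `{e_i, …, e_m}` and `N_i` the set of common neighbors
in `G_L[i]` of the two endpoints of `e_i`, the set `N_i` can be partitioned into two
(possibly empty) cliques of `G`. -/
def IsCNEEO {V : Type*} (G : SimpleGraph V) (L : List (Sym2 V)) : Prop :=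
  L.Nodup ∧ (∀ e, e ∈ L ↔ e ∈ G.edgeSet) ∧
  ∀ i : Fin L.length, ∃ A B : Set V,
    {w | ∀ x ∈ L.get i, (G.deleteEdges {e | e ∈ L.take i.1}).Adj x w} = A ∪ B ∧
    Disjoint A B ∧ G.IsClique A ∧ G.IsClique B

/-- The hyperbolic length of an edge, i.e. the hyperbolic distance between the points
assigned to its two endpoints. -/
noncomputable def edgeLen {V : Type*} (p : V → UpperHalfPlane) : Sym2 V → ℝ :=
  Sym2.lift ⟨fun u v => dist (p u) (p v), fun u v => dist_comm (p u) (p v)⟩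

/-- For a hyperbolic unit disk graph, any enumeration of all edges sorted in
non-increasing order of hyperbolic length is a CNEEO. -/
theorem sorted_edges_isCNEEO {V : Type*} [Fintype V]
    (p : V → UpperHalfPlane) (R : ℝ) (hR : 0 ≤ R)
    (G : SimpleGraph V)
    (hG : ∀ u v, G.Adj u v ↔ u ≠ v ∧ dist (p u) (p v) ≤ R)
    (L : List (Sym2 V)) (hnd : L.Nodup)
    (hmem : ∀ e, e ∈ L ↔ e ∈ G.edgeSet)
    (hsorted : L.Pairwise fun e f => edgeLen p f ≤ edgeLen p e) :
    IsCNEEO G L := by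
  refine ⟨hnd, hmem, fun i => ?_⟩
  obtain ⟨⟨u, v⟩, he⟩ := Quot.exists_rep (L.get i)
  have he' : L.get i = s(u, v) := he.symm
  have hadj : G.Adj u v := by
    rw [← SimpleGraph.mem_edgeSet, ← hmem, ← he']
    exact List.get_mem L i
  have hdistR : dist (p u) (p v) ≤ R := ((hG u v).1 hadj).2
  -- every edge in the residual graph is no longer than the current edge
  have hlen : ∀ a b : V, (G.deleteEdges {e | e ∈ L.take i.1}).Adj a b →
      dist (p a) (p b) ≤ dist (p u) (p v) := by
    intro a b hab
    rw [SimpleGraph.deleteEdges_adj] at hab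
    obtain ⟨hab1, hab2⟩ := hab
    have hmem' : s(a, b) ∈ L := (hmem _).2 ((SimpleGraph.mem_edgeSet G).2 hab1)
    obtain ⟨j, hj⟩ := List.get_of_mem hmem'
    have hij : i ≤ j := by
      by_contra hcon
      push_neg at hcon
      apply hab2
      have hjlt : j.1 < (L.take i.1).length := by
        simp [List.length_take]
        omega
      have hgt : (L.take i.1)[j.1] = L[j.1] := List.getElem_take ..
      have : L.get j ∈ L.take i.1 := by
        have := List.getElem_mem hjlt
        rwa [hgt] at this
      rw [hj] at this
      exact this
    have hrel : edgeLen p (L.get j) ≤ edgeLen p (L.get i) := by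
      rcases eq_or_lt_of_le hij with h | h
      · rw [h]
      · exact hsorted.rel_get_of_lt h
    rw [hj, he'] at hrel
    simpa [edgeLen] using hrel
  -- normalize
  obtain ⟨f, t, hfGood, ht, hf1, hf2⟩ :=
    exists_norm ((p u : ℂ)) ((p v : ℂ)) (p u).im_pos (p v).im_pos
  set N := {w | ∀ x ∈ L.get i, (G.deleteEdges {e | e ∈ L.take i.1}).Adj x w} with hN
  have hNadj : ∀ w ∈ N, (G.deleteEdges {e | e ∈ L.take i.1}).Adj u w ∧
      (G.deleteEdges {e | e ∈ L.take i.1}).Adj v w := by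
    intro w hw
    rw [hN, Set.mem_setOf_eq, he'] at hw
    exact ⟨hw u (Sym2.mem_mk_left u v), hw v (Sym2.mem_mk_right u v)⟩
  refine ⟨N ∩ {w | 0 ≤ (f (p w : ℂ)).re}, N ∩ {w | (f (p w : ℂ)).re < 0}, ?_, ?_, ?_, ?_⟩
  · ext w
    simp only [Set.mem_union, Set.mem_inter_iff, Set.mem_setOf_eq]
    constructor
    · intro hw
      rcases le_or_gt 0 (f (p w : ℂ)).re with h | h
      · exact Or.inl ⟨hw, h⟩
      · exact Or.inr ⟨hw, h⟩
    · rintro (⟨hw, _⟩ | ⟨hw, _⟩) <;> exact hw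
  · rw [Set.disjoint_left]
    rintro w ⟨_, h1⟩ ⟨_, h2⟩
    simp only [Set.mem_setOf_eq] at h1 h2
    linarith
  · -- clique A
    intro w1 hw1 w2 hw2 hne
    obtain ⟨hw1N, hw1s⟩ := hw1
    obtain ⟨hw2N, hw2s⟩ := hw2
    simp only [Set.mem_setOf_eq] at hw1s hw2s
    obtain ⟨ha1, hb1⟩ := hNadj w1 hw1N
    obtain ⟨ha2, hb2⟩ := hNadj w2 hw2N
    refine (hG w1 w2).2 ⟨hne, le_trans ?_ hdistR⟩
    exact half_lens (p u) (p v) (p w1) (p w2) f t hfGood ht hf1 hf2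
      (mul_nonneg hw1s hw2s) (hlen u w1 ha1) (hlen v w1 hb1) (hlen u w2 ha2) (hlen v w2 hb2)
  · -- clique B
    intro w1 hw1 w2 hw2 hne
    obtain ⟨hw1N, hw1s⟩ := hw1
    obtain ⟨hw2N, hw2s⟩ := hw2
    simp only [Set.mem_setOf_eq] at hw1s hw2s
    obtain ⟨ha1, hb1⟩ := hNadj w1 hw1N
    obtain ⟨ha2, hb2⟩ := hNadj w2 hw2N
    refine (hG w1 w2).2 ⟨hne, le_trans ?_ hdistR⟩
    exact half_lens (p u) (p v) (p w1) (p w2) f t hfGood ht hf1 hf2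
      (le_of_lt (mul_pos_of_neg_of_neg hw1s hw2s))
      (hlen u w1 ha1) (hlen v w1 hb1) (hlen u w2 ha2) (hlen v w2 hb2)
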